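/- (Gilbert–Varshamov bound) For integers n ≥ k ≥ 1 and d ≥ 2, if 2^{n−k} > Σ_{i=0}^{d−2} C(n−1, i), then there exists a binary linear code of length n and dimension k (a k-dimensional subspace of F_2ⁿ) whose minimum Hamming weight over nonzero codewords is at least d. -/

import Mathlib

theorem stmt_12 (n k d : ℕ) (hk : 1 ≤ k) (hkn : k ≤ n) (hd : 2 ≤ d)
    (h : ∑ i ∈ Finset.range (d - 1), (n - 1).choose i < 2 ^ (n - k)) :
    ∃ B : Submodule (ZMod 2) (Fin n → ZMod 2),
      Module.finrank (ZMod 2) B = k ∧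
      ∀ b ∈ B, b ≠ 0 → d ≤ hammingNorm b := by
  classical
  -- Step 1: construct columns of a parity-check matrix, any d-1 of which sum to nonzero
  have key : ∀ j, j ≤ n → ∃ c : Fin j → (Fin (n - k) → ZMod 2),
      ∀ S : Finset (Fin j), S.Nonempty → S.card ≤ d - 1 → ∑ i ∈ S, c i ≠ 0 := by
    intro j
    induction j with
    | zero =>
      intro _
      refine ⟨Fin.elim0, fun S hS _ => ?_⟩
      exact absurd (Finset.eq_empty_of_isEmpty S) hS.ne_empty
    | succ j ih =>
      intro hj
      obtain ⟨c, hc⟩ := ih (by omega)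
      set F : Finset (Fin (n - k) → ZMod 2) :=
        (Finset.range (d - 1)).biUnion
          (fun m => (Finset.powersetCard m (Finset.univ : Finset (Fin j))).image
            (fun S => ∑ i ∈ S, c i)) with hF
      have hFcard : F.card ≤ ∑ m ∈ Finset.range (d - 1), (n - 1).choose m := by
        refine le_trans Finset.card_biUnion_le (Finset.sum_le_sum ?_)
        intro m _
        refine le_trans Finset.card_image_le ?_
        rw [Finset.card_powersetCard, Finset.card_univ, Fintype.card_fin]
        exact Nat.choose_le_choose m (by omega)
      have hcardV : Fintype.card (Fin (n - k) → ZMod 2) = 2 ^ (n - k) := by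
        rw [Fintype.card_fun, ZMod.card, Fintype.card_fin]
      have hex : ∃ v, v ∉ F := by
        by_contra hv
        push_neg at hv
        have hsub : (Finset.univ : Finset (Fin (n - k) → ZMod 2)) ⊆ F :=
          fun v _ => hv v
        have := Finset.card_le_card hsub
        rw [Finset.card_univ, hcardV] at this
        omega
      obtain ⟨v, hv⟩ := hex
      refine ⟨Fin.snoc c v, ?_⟩
      intro S hS hScard
      set T : Finset (Fin j) := Finset.univ.filter (fun i => i.castSucc ∈ S) with hT
      have hErase : S.erase (Fin.last j) = T.map Fin.castSuccEmb := by
        ext a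
        simp only [Finset.mem_erase, Finset.mem_map, hT, Finset.mem_filter,
          Finset.mem_univ, true_and]
        constructor
        · rintro ⟨hne, ha⟩
          obtain ⟨i, rfl⟩ := Fin.exists_castSucc_eq.mpr hne
          exact ⟨i, ha, rfl⟩
        · rintro ⟨i, hi, rfl⟩
          exact ⟨(Fin.castSucc_lt_last i).ne, hi⟩
      have hTsum : ∑ i ∈ S.erase (Fin.last j), Fin.snoc c v i = ∑ i ∈ T, c i := by
        rw [hErase, Finset.sum_map]
        refine Finset.sum_congr rfl (fun i _ => ?_)
        have he : (Fin.castSuccEmb i : Fin (j + 1)) = i.castSucc := rfl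
        rw [he]
        simp [Fin.snoc_castSucc]
      by_cases hlast : Fin.last j ∈ S
      · -- sum = v + sum over T, with T.card ≤ d - 2
        have hcardT : T.card ≤ d - 2 := by
          have h1 : (S.erase (Fin.last j)).card = S.card - 1 :=
            Finset.card_erase_of_mem hlast
          have h2 : (T.map Fin.castSuccEmb).card = T.card := Finset.card_map _
          rw [hErase, h2] at h1
          have := hS.card_pos
          omega
        have hsum : ∑ i ∈ S, Fin.snoc c v i = v + ∑ i ∈ T, c i := by
          rw [← Finset.add_sum_erase S _ hlast, hTsum, Fin.snoc_last]
        intro hzero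
        rw [hsum] at hzero
        have hself : (∑ i ∈ T, c i) + (∑ i ∈ T, c i) = 0 := by
          rw [← two_smul (ZMod 2), show (2 : ZMod 2) = 0 from rfl, zero_smul]
        have hveq : v = ∑ i ∈ T, c i := add_right_cancel (hzero.trans hself.symm)
        apply hv
        rw [hF, Finset.mem_biUnion]
        refine ⟨T.card, Finset.mem_range.mpr (by omega), ?_⟩
        rw [Finset.mem_image]
        exact ⟨T, Finset.mem_powersetCard_univ.mpr rfl, hveq.symm⟩
      · -- sum reduces to sum over T; apply induction hypothesis
        have hSE : S.erase (Fin.last j) = S := Finset.erase_eq_of_notMem hlast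
        rw [hSE] at hTsum hErase
        rw [hTsum]
        have hTne : T.Nonempty := by
          rw [← Finset.map_nonempty (f := Fin.castSuccEmb), ← hErase]
          exact hS
        have hTcard : T.card ≤ d - 1 := by
          have := Finset.card_map (f := Fin.castSuccEmb) (s := T)
          rw [← hErase] at this
          omega
        exact hc T hTne hTcard
  obtain ⟨c, hc⟩ := key n le_rfl
  set f : (Fin n → ZMod 2) →ₗ[ZMod 2] (Fin (n - k) → ZMod 2) :=
    Fintype.linearCombination (ZMod 2) c with hf
  -- every nonzero element of ker f has hammingNorm ≥ d
  have hker : ∀ x, x ∈ LinearMap.ker f → x ≠ 0 → d ≤ hammingNorm x := by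
    intro x hx hx0
    by_contra hlt
    push_neg at hlt
    set S : Finset (Fin n) := Finset.univ.filter (fun i => x i ≠ 0) with hSdef
    have hSnorm : hammingNorm x = S.card := rfl
    have hSne : S.Nonempty := by
      obtain ⟨i, hi⟩ := Function.ne_iff.mp hx0
      exact ⟨i, Finset.mem_filter.mpr ⟨Finset.mem_univ i, hi⟩⟩
    have hScard : S.card ≤ d - 1 := by omega
    have hone : ∀ a : ZMod 2, a ≠ 0 → a = 1 := by decide
    have hsum : ∑ i ∈ S, c i = f x := by
      rw [hf, Fintype.linearCombination_apply]
      rw [← Finset.sum_subset (Finset.subset_univ S) (by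
        intro i _ hiS
        have : x i = 0 := by
          by_contra hxi
          exact hiS (Finset.mem_filter.mpr ⟨Finset.mem_univ i, hxi⟩)
        rw [this, zero_smul])]
      refine Finset.sum_congr rfl (fun i hi => ?_)
      rw [hone (x i) (Finset.mem_filter.mp hi).2, one_smul]
    exact hc S hSne hScard (hsum.trans (LinearMap.mem_ker.mp hx))
  -- ker f has finrank ≥ k
  have hrank : k ≤ Module.finrank (ZMod 2) (LinearMap.ker f) := by
    have h1 := LinearMap.finrank_range_add_finrank_ker f
    have h2 : Module.finrank (ZMod 2) (Fin n → ZMod 2) = n := by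
      rw [Module.finrank_pi, Fintype.card_fin]
    have h3 : Module.finrank (ZMod 2) (LinearMap.range f) ≤ n - k := by
      have := Submodule.finrank_le (LinearMap.range f)
      rwa [Module.finrank_pi, Fintype.card_fin] at this
    omega
  obtain ⟨g, hg⟩ := exists_linearIndependent_of_le_finrank hrank
  have hg' : LinearIndependent (ZMod 2)
      (fun i : Fin k => ((g i : LinearMap.ker f) : Fin n → ZMod 2)) :=
    hg.map' (Submodule.subtype _) (Submodule.ker_subtype _)
  refine ⟨Submodule.span (ZMod 2)
    (Set.range (fun i : Fin k => ((g i : LinearMap.ker f) : Fin n → ZMod 2))), ?_, ?_⟩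
  · rw [finrank_span_eq_card hg', Fintype.card_fin]
  · intro b hb hb0
    apply hker b _ hb0
    have hle : Submodule.span (ZMod 2)
        (Set.range (fun i : Fin k => ((g i : LinearMap.ker f) : Fin n → ZMod 2)))
        ≤ LinearMap.ker f := by
      rw [Submodule.span_le]
      rintro _ ⟨i, rfl⟩
      exact (g i).2
    exact hle hb
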